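/- The map λ defined by λ(x,y) = γ(y,x)^{-1} γ(x,y) is additive in its second coordinate: λ(u, a + b) = λ(u, a) · λ(u, b) in Adj(A(M,T)) for all u, a, b ∈ M. Since λ(x,y) = λ(y,x)^{-1}, λ is consequently additive in both coordinates. -/

import Mathlib

/-!
Common setup: the adjoint group of the Alexander quandle `A(M,T)` (F.J.-B.J. Clauwens,
"The adjoint group of an Alexander quandle").

For an abelian group `M` with automorphism `T`, the Alexander quandle `A(M,T)` is `M` with
`y * x = T y + x - T x`, and the adjoint group `Adj(A(M,T))` is presented with generators
`e x` for `x : M` and relations `e (y * x) = (e x)⁻¹ * e y * e x`.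
-/

open scoped TensorProduct

namespace Clauwens

variable {M : Type*} [AddCommGroup M]

/-- The relations of the adjoint group of the Alexander quandle `A(M,T)`:
for each `x y : M`, the relation `e_{y*x} = e_x⁻¹ * e_y * e_x`, where `y*x = T y + x - T x`. -/
def rels (T : M ≃+ M) : Set (FreeGroup M) :=
  {r | ∃ x y : M, r = FreeGroup.of (T y + x - T x) *
      ((FreeGroup.of x)⁻¹ * FreeGroup.of y * FreeGroup.of x)⁻¹}

/-- The adjoint group `Adj(A(M,T))` of the Alexander quandle. -/
abbrev Adj (T : M ≃+ M) : Type _ := PresentedGroup (rels T)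

/-- The generator `e_x` of the adjoint group. -/
def e (T : M ≃+ M) (x : M) : Adj T := PresentedGroup.of x

/-- The quandle automorphism `p ↦ p * x = T p + x - T x` of `A(M,T)`. -/
def σ (T : M ≃+ M) (x : M) : Equiv.Perm M where
  toFun p := T p + (x - T x)
  invFun p := T.symm (p - (x - T x))
  left_inv p := by simp
  right_inv p := by simp

lemma σ_apply (T : M ≃+ M) (x p : M) : σ T x p = T p + (x - T x) := rfl

lemma σ_inv_apply (T : M ≃+ M) (x p : M) : (σ T x)⁻¹ p = T.symm (p - (x - T x)) := rfl

lemma σ_rel (T : M ≃+ M) (x y : M) :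
    σ T x * σ T y * (σ T x)⁻¹ = σ T (T y + x - T x) := by
  ext p
  simp only [Equiv.Perm.mul_apply, σ_apply, σ_inv_apply, map_add, map_sub,
    AddEquiv.apply_symm_apply]
  abel

/-- The homomorphism `ρ` from the adjoint group to the group of quandle automorphisms of
`A(M,T)` acting on the right of `M` (hence the `ᵐᵒᵖ`), induced by the right action
`p · e_x = p * x = T p + x - T x`; the automorphism by which `g` acts is `(ρ T g).unop`. -/
def ρ (T : M ≃+ M) : Adj T →* (Equiv.Perm M)ᵐᵒᵖ :=
  PresentedGroup.toGroup (f := fun x => MulOpposite.op (σ T x)) (by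
    rintro r ⟨x, y, rfl⟩
    simp only [map_mul, map_inv, FreeGroup.lift_apply_of, ← MulOpposite.op_inv, ← MulOpposite.op_mul,
      mul_inv_rev, inv_inv]
    rw [MulOpposite.op_eq_one_iff, ← σ_rel T x y]
    group)

/-- `γ(x,y) = e_0⁻¹ e_{x+y} e_y⁻¹ e_0 e_x⁻¹ e_0`, so that
`e_0⁻¹ e_{x+y} = γ(x,y) e_0⁻¹ e_x e_0⁻¹ e_y`. -/
def γ (T : M ≃+ M) (x y : M) : Adj T :=
  (e T 0)⁻¹ * e T (x + y) * (e T y)⁻¹ * e T 0 * (e T x)⁻¹ * e T 0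

/-- `λ(x,y) = γ(y,x)⁻¹ γ(x,y)`. -/
def lam (T : M ≃+ M) (x y : M) : Adj T := (γ T y x)⁻¹ * γ T x y

/-- The additive endomorphism `τ` of `M ⊗_ℤ M` with `τ(x ⊗ y) = T y ⊗ x`. -/
noncomputable def τmap (T : M ≃+ M) : M ⊗[ℤ] M →ₗ[ℤ] M ⊗[ℤ] M :=
  (TensorProduct.comm ℤ M M).toLinearMap ∘ₗ
    (LinearMap.lTensor M T.toAddMonoidHom.toIntLinearMap)

lemma τmap_tmul (T : M ≃+ M) (x y : M) : τmap T (x ⊗ₜ[ℤ] y) = T y ⊗ₜ[ℤ] x := rfl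

/-- `S(M,T) = coker(1 - τ) = (M ⊗_ℤ M)/im(1 - τ)`. -/
abbrev S (T : M ≃+ M) : Type _ :=
  (M ⊗[ℤ] M) ⧸ LinearMap.range (LinearMap.id - τmap T)

/-- The class `[x ⊗ y]` in `S(M,T)`. -/
noncomputable def cls (T : M ≃+ M) (x y : M) : S T := Submodule.Quotient.mk (x ⊗ₜ[ℤ] y)

lemma mk_τmap (T : M ≃+ M) (w : M ⊗[ℤ] M) :
    (Submodule.Quotient.mk (τmap T w) : S T) = Submodule.Quotient.mk w := by
  rw [Submodule.Quotient.eq]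
  exact ⟨-w, by simp [LinearMap.sub_apply]; abel⟩

lemma cls_T (T : M ≃+ M) (x y : M) : cls T (T x) (T y) = cls T x y := by
  have h1 : cls T (T x) (T y) = Submodule.Quotient.mk (τmap T (T y ⊗ₜ[ℤ] x)) := rfl
  have h2 : (Submodule.Quotient.mk (T y ⊗ₜ[ℤ] x) : S T)
      = Submodule.Quotient.mk (τmap T (x ⊗ₜ[ℤ] y)) := rfl
  rw [h1, mk_τmap, h2, mk_τmap]; rfl

lemma cls_add_left (T : M ≃+ M) (x x' y : M) :
    cls T (x + x') y = cls T x y + cls T x' y := by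
  simp only [cls, ← Submodule.Quotient.mk_add, TensorProduct.add_tmul]

lemma cls_add_right (T : M ≃+ M) (x y y' : M) :
    cls T x (y + y') = cls T x y + cls T x y' := by
  simp only [cls, ← Submodule.Quotient.mk_add, TensorProduct.tmul_add]

lemma cls_neg_left (T : M ≃+ M) (x y : M) : cls T (-x) y = -cls T x y := by
  simp only [cls, ← Submodule.Quotient.mk_neg, TensorProduct.neg_tmul]

lemma cls_zero_left (T : M ≃+ M) (y : M) : cls T 0 y = 0 := by
  simp [cls, TensorProduct.zero_tmul]

lemma cls_zero_right (T : M ≃+ M) (x : M) : cls T x 0 = 0 := by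
  simp [cls, TensorProduct.tmul_zero]

/-- `T^m` for `m : ℤ`. -/
def Tz (T : M ≃+ M) (m : ℤ) : M ≃+ M := (m • T : AddAut M)

lemma Tz_zero (T : M ≃+ M) (x : M) : Tz T 0 x = x := rfl

lemma Tz_one (T : M ≃+ M) (x : M) : Tz T 1 x = T x := by simp [Tz]

lemma Tz_add (T : M ≃+ M) (m n : ℤ) (x : M) : Tz T (m + n) x = Tz T m (Tz T n x) := by
  simp [Tz, add_zsmul, AddAut.add_apply]

lemma cls_Tz_shift (T : M ≃+ M) (m : ℤ) (x y : M) :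
    cls T (Tz T (m + 1) x) (Tz T (m + 1) y) = cls T (Tz T m x) (Tz T m y) := by
  have h : ∀ z : M, Tz T (m + 1) z = T (Tz T m z) := by
    intro z; rw [add_comm, Tz_add, Tz_one]
  rw [h, h, cls_T]

lemma cls_Tz (T : M ≃+ M) (m : ℤ) (x y : M) :
    cls T (Tz T m x) (Tz T m y) = cls T x y := by
  induction m using Int.induction_on with
  | zero => rfl
  | succ i ih => rw [cls_Tz_shift, ih]
  | pred i ih =>
      have h := cls_Tz_shift T (-(i : ℤ) - 1) x y
      rw [sub_add_cancel] at h
      rw [← h, ih]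

/-- `F(M,T)` is the set `ℤ × M × S(M,T)` equipped with the multiplication
`(k, x, α)(m, y, β) = (k + m, T^m x + y, α + β + [T^m x ⊗ y])`. -/
abbrev F (T : M ≃+ M) : Type _ := ℤ × M × S T

noncomputable instance (T : M ≃+ M) : Group (F T) where
  mul g h := (g.1 + h.1, Tz T h.1 g.2.1 + h.2.1, g.2.2 + h.2.2 + cls T (Tz T h.1 g.2.1) h.2.1)
  one := ((0 : ℤ), (0 : M), (0 : S T))
  inv g := (-g.1, -(Tz T (-g.1) g.2.1), -g.2.2 + cls T g.2.1 g.2.1)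
  mul_assoc g h k := by
    obtain ⟨a, x, α⟩ := g; obtain ⟨b, y, β⟩ := h; obtain ⟨c, z, δ⟩ := k
    refine Prod.ext (add_assoc a b c) (Prod.ext ?_ ?_)
    · show Tz T c (Tz T b x + y) + z = Tz T (b + c) x + (Tz T c y + z)
      rw [add_comm b c, Tz_add, map_add]
      abel
    · show α + β + cls T (Tz T b x) y + δ + cls T (Tz T c (Tz T b x + y)) z
        = α + (β + δ + cls T (Tz T c y) z) + cls T (Tz T (b + c) x) (Tz T c y + z)
      rw [add_comm b c, Tz_add, map_add, cls_add_left, cls_add_right]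
      have h1 : cls T (Tz T c (Tz T b x)) (Tz T c y) = cls T (Tz T b x) y := cls_Tz T c _ _
      rw [h1]
      abel
  one_mul g := by
    obtain ⟨a, x, α⟩ := g
    refine Prod.ext (zero_add a) (Prod.ext ?_ ?_)
    · show Tz T a 0 + x = x
      rw [map_zero, zero_add]
    · show 0 + α + cls T (Tz T a 0) x = α
      rw [map_zero, cls_zero_left, zero_add, add_zero]
  mul_one g := by
    obtain ⟨a, x, α⟩ := g
    refine Prod.ext (add_zero a) (Prod.ext ?_ ?_)
    · show Tz T 0 x + 0 = x
      rw [Tz_zero, add_zero]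
    · show α + 0 + cls T (Tz T 0 x) 0 = α
      rw [cls_zero_right, add_zero, add_zero]
  inv_mul_cancel g := by
    obtain ⟨a, x, α⟩ := g
    have hx : Tz T a (Tz T (-a) x) = x := by
      rw [← Tz_add, add_neg_cancel, Tz_zero]
    refine Prod.ext (neg_add_cancel a) (Prod.ext ?_ ?_)
    · show Tz T a (-(Tz T (-a) x)) + x = 0
      rw [map_neg, hx, neg_add_cancel]
    · show -α + cls T x x + α + cls T (Tz T a (-(Tz T (-a) x))) x = 0
      rw [map_neg, hx, cls_neg_left]
      abel

/-- The canonical augmentation `ε : Adj(A(M,T)) → ℤ`, with `ε(e_x) = 1` for all `x`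
(written multiplicatively since `Adj` is a multiplicative group). -/
def ε (T : M ≃+ M) : Adj T →* Multiplicative ℤ :=
  PresentedGroup.toGroup (f := fun _ => Multiplicative.ofAdd (1 : ℤ)) (by
    rintro r ⟨x, y, rfl⟩
    simp only [map_mul, map_inv, FreeGroup.lift_apply_of]
    group)

/-- The subgroup `F(M,T)⁰` of elements `(0, x, α)` of `F(M,T)`. -/
noncomputable def Fo (T : M ≃+ M) : Subgroup (F T) where
  carrier := {g | g.1 = 0}
  mul_mem' := by
    rintro ⟨a, x, α⟩ ⟨b, y, β⟩ (ha : a = 0) (hb : b = 0)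
    show a + b = 0
    rw [ha, hb, add_zero]
  one_mem' := rfl
  inv_mem' := by
    rintro ⟨a, x, α⟩ (ha : a = 0)
    show -a = 0
    rw [ha, neg_zero]

/-- The fundamental group `π₁(A(M,T), 0)` of the Alexander quandle based at `0 ∈ M`:
the elements of `ker ε` fixing the base point `0`. -/
def pi1 (T : M ≃+ M) : Subgroup (Adj T) where
  carrier := {g | g ∈ (ε T).ker ∧ (ρ T g).unop 0 = 0}
  one_mem' := ⟨(ε T).ker.one_mem, by simp⟩
  mul_mem' := by
    intro a b ha hb
    refine ⟨(ε T).ker.mul_mem ha.1 hb.1, ?_⟩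
    show ((ρ T) (a * b)).unop 0 = 0
    rw [map_mul, MulOpposite.unop_mul, Equiv.Perm.mul_apply, ha.2, hb.2]
  inv_mem' := by
    intro a ha
    refine ⟨(ε T).ker.inv_mem ha.1, ?_⟩
    show ((ρ T) a⁻¹).unop 0 = 0
    rw [map_inv, MulOpposite.unop_inv]
    exact Equiv.Perm.inv_eq_iff_eq.mpr ha.2.symm



section LamAdditive

variable (T : M ≃+ M)

/-- `g x = e₀⁻¹ eₓ`. -/
def gg (x : M) : Adj T := (e T 0)⁻¹ * e T x

lemma e_eq_mk (w : M) : e T w = PresentedGroup.mk (rels T) (FreeGroup.of w) := rfl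

/-- The defining relation of the adjoint group. -/
lemma rel_e (x y : M) : e T (T y + x - T x) = (e T x)⁻¹ * e T y * e T x := by
  have hmem : (FreeGroup.of (T y + x - T x) *
      ((FreeGroup.of x)⁻¹ * FreeGroup.of y * FreeGroup.of x)⁻¹ : FreeGroup M) ∈ rels T :=
    ⟨x, y, rfl⟩
  have h1 : (PresentedGroup.mk (rels T)) (FreeGroup.of (T y + x - T x) *
      ((FreeGroup.of x)⁻¹ * FreeGroup.of y * FreeGroup.of x)⁻¹) = 1 :=
    (QuotientGroup.eq_one_iff _).mpr (Subgroup.subset_normalClosure hmem)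
  rw [map_mul, map_inv] at h1
  have h2 := mul_inv_eq_one.mp h1
  rw [map_mul, map_mul, map_inv] at h2
  simpa only [← e_eq_mk] using h2

lemma conj_e_zero (w : M) : (e T 0)⁻¹ * e T w * e T 0 = e T (T w) := by
  have h := (rel_e T 0 w).symm
  simpa using h

lemma conj_e_zero_inv (w : M) : (e T 0)⁻¹ * (e T w)⁻¹ * e T 0 = (e T (T w))⁻¹ := by
  rw [← conj_e_zero T w]; group

lemma conj_e (z w : M) : (e T z)⁻¹ * e T w * e T z = e T (T w + z - T z) :=
  (rel_e T z w).symm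

lemma conj_e_inv (z w : M) : (e T z)⁻¹ * (e T w)⁻¹ * e T z = (e T (T w + z - T z))⁻¹ := by
  rw [← conj_e T z w]; group

/-- The key relation at the level of `g`:
`g(z)⁻¹ g(y) g(z) = g(y + c) g(c)⁻¹` with `c = T⁻¹ z - z`. -/
lemma conj_gg (z y : M) :
    (gg T z)⁻¹ * gg T y * gg T z
      = gg T (y + (T.symm z - z)) * (gg T (T.symm z - z))⁻¹ := by
  have hd : T (T.symm z - z) = z - T z := by
    rw [map_sub, T.apply_symm_apply]
  -- LHS
  have hL : (gg T z)⁻¹ * gg T y * gg T z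
      = ((e T z)⁻¹ * e T y * e T z) * ((e T z)⁻¹ * (e T 0)⁻¹ * e T z) := by
    unfold gg; group
  rw [hL, conj_e, conj_e_inv]
  -- RHS
  have hR : gg T (y + (T.symm z - z)) * (gg T (T.symm z - z))⁻¹
      = ((e T 0)⁻¹ * e T (y + (T.symm z - z)) * e T 0) *
        ((e T 0)⁻¹ * (e T (T.symm z - z))⁻¹ * e T 0) := by
    unfold gg; group
  rw [hR, conj_e_zero, conj_e_zero_inv, map_add, hd]
  have h0 : T (0 : M) = 0 := map_zero T
  rw [h0]
  congr 2
  · abel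
  · congr 1; abel

lemma conj_gg_inv (z y : M) :
    (gg T z)⁻¹ * (gg T y)⁻¹ * gg T z
      = gg T (T.symm z - z) * (gg T (y + (T.symm z - z)))⁻¹ := by
  have h := conj_gg T z y
  have h2 : (gg T z)⁻¹ * (gg T y)⁻¹ * gg T z
      = ((gg T z)⁻¹ * gg T y * gg T z)⁻¹ := by group
  rw [h2, h]
  group

/-- Conjugation by `g(x) g(y)` agrees with conjugation by `g(x+y)` on all generators. -/
lemma conj_gg_two (x y w : M) :
    (gg T y)⁻¹ * ((gg T x)⁻¹ * gg T w * gg T x) * gg T y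
      = (gg T (x + y))⁻¹ * gg T w * gg T (x + y) := by
  set c1 := T.symm x - x with hc1
  set c2 := T.symm y - y with hc2
  have hc : T.symm (x + y) - (x + y) = c1 + c2 := by
    rw [map_add, hc1, hc2]; abel
  rw [conj_gg T x w]
  have hsplit : (gg T y)⁻¹ * (gg T (w + c1) * (gg T c1)⁻¹) * gg T y
      = ((gg T y)⁻¹ * gg T (w + c1) * gg T y) *
        ((gg T y)⁻¹ * (gg T c1)⁻¹ * gg T y) := by group
  rw [hsplit, conj_gg T y (w + c1), conj_gg_inv T y c1]
  rw [conj_gg T (x + y) w, hc]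
  have h1 : w + c1 + c2 = w + (c1 + c2) := by abel
  rw [← hc2]
  rw [h1]
  group

/-- `γ(x,y) = g(x+y) g(y)⁻¹ g(x)⁻¹`. -/
lemma gamma_eq_gg (x y : M) : γ T x y = gg T (x + y) * (gg T y)⁻¹ * (gg T x)⁻¹ := by
  unfold γ gg; group

/-- `λ(x,y) = g(y) g(x) g(y)⁻¹ g(x)⁻¹`. -/
lemma lam_eq_gg (x y : M) :
    lam T x y = gg T y * gg T x * (gg T y)⁻¹ * (gg T x)⁻¹ := by
  unfold lam
  rw [gamma_eq_gg, gamma_eq_gg, add_comm y x]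
  group

/-- `γ(x,y)` commutes with every generator `g(w)`. -/
lemma gamma_commute_gg (x y w : M) : Commute (γ T x y) (gg T w) := by
  have h := conj_gg_two T x y w
  rw [gamma_eq_gg]
  show gg T (x + y) * (gg T y)⁻¹ * (gg T x)⁻¹ * gg T w
      = gg T w * (gg T (x + y) * (gg T y)⁻¹ * (gg T x)⁻¹)
  calc gg T (x + y) * (gg T y)⁻¹ * (gg T x)⁻¹ * gg T w
      = gg T (x + y) *
        ((gg T y)⁻¹ * ((gg T x)⁻¹ * gg T w * gg T x) * gg T y) *
        ((gg T x * gg T y)⁻¹) := by group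
    _ = gg T (x + y) * ((gg T (x + y))⁻¹ * gg T w * gg T (x + y)) *
        ((gg T x * gg T y)⁻¹) := by rw [h]
    _ = gg T w * (gg T (x + y) * (gg T y)⁻¹ * (gg T x)⁻¹) := by group

/-- The subgroup generated by the `g(w)`. -/
def Gc : Subgroup (Adj T) := Subgroup.closure (Set.range (gg T))

lemma gg_mem (w : M) : gg T w ∈ Gc T := Subgroup.subset_closure ⟨w, rfl⟩

lemma commute_of_commute_gg {h : Adj T} (hc : ∀ w, Commute h (gg T w)) :
    ∀ u ∈ Gc T, Commute h u := by
  intro u hu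
  induction hu using Subgroup.closure_induction with
  | mem x hx => obtain ⟨w, rfl⟩ := hx; exact hc w
  | one => exact Commute.one_right h
  | mul a b _ _ ha hb => exact ha.mul_right hb
  | inv a _ ha => exact ha.inv_right

lemma gamma_mem (x y : M) : γ T x y ∈ Gc T := by
  rw [gamma_eq_gg]
  exact mul_mem (mul_mem (gg_mem T _) (inv_mem (gg_mem T _))) (inv_mem (gg_mem T _))

lemma lam_mem (x y : M) : lam T x y ∈ Gc T := by
  unfold lam
  exact mul_mem (inv_mem (gamma_mem T _ _)) (gamma_mem T _ _)

lemma gamma_commute (x y : M) : ∀ u ∈ Gc T, Commute (γ T x y) u :=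
  commute_of_commute_gg T (gamma_commute_gg T x y)

lemma lam_commute (x y : M) : ∀ u ∈ Gc T, Commute (lam T x y) u := by
  apply commute_of_commute_gg
  intro w
  exact ((gamma_commute T y x (gg T w) (gg_mem T w)).inv_left).mul_left
    (gamma_commute T x y (gg T w) (gg_mem T w))

lemma lam_antisymm (x y : M) : lam T x y = (lam T y x)⁻¹ := by
  rw [lam_eq_gg, lam_eq_gg]; group

lemma lam_add_right (u a b : M) : lam T u (a + b) = lam T u a * lam T u b := by
  have hg : gg T (a + b) = γ T a b * gg T a * gg T b := by
    rw [gamma_eq_gg]; group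
  set A := gg T a
  set B := gg T b
  set U := gg T u
  have hXmem : A * B * U * B⁻¹ * A⁻¹ * U⁻¹ ∈ Gc T := by
    apply mul_mem; apply mul_mem; apply mul_mem; apply mul_mem; apply mul_mem
    exacts [gg_mem T a, gg_mem T b, gg_mem T u,
      inv_mem (gg_mem T b), inv_mem (gg_mem T a), inv_mem (gg_mem T u)]
  have hγU : Commute (γ T a b) U⁻¹ := (gamma_commute_gg T a b u).inv_right
  have hγX : Commute (γ T a b) (A * B * U * B⁻¹ * A⁻¹ * U⁻¹) :=
    gamma_commute T a b _ hXmem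
  have hLbA : Commute (lam T u b) A := lam_commute T u b A (gg_mem T a)
  have hLL : Commute (lam T u b) (lam T u a) := lam_commute T u b _ (lam_mem T u a)
  calc lam T u (a + b)
      = gg T (a + b) * U * (gg T (a + b))⁻¹ * U⁻¹ := lam_eq_gg T u (a + b)
    _ = γ T a b * (A * B * U * B⁻¹ * A⁻¹) * (γ T a b)⁻¹ * U⁻¹ := by
        rw [hg]; group
    _ = γ T a b * (A * B * U * B⁻¹ * A⁻¹) * (U⁻¹ * (γ T a b)⁻¹) := by
        rw [← hγU.inv_left.eq]; group
    _ = γ T a b * (A * B * U * B⁻¹ * A⁻¹ * U⁻¹) * (γ T a b)⁻¹ := by group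
    _ = A * B * U * B⁻¹ * A⁻¹ * U⁻¹ := by rw [hγX.eq]; group
    _ = A * (B * U * B⁻¹ * U⁻¹) * (U * A⁻¹ * U⁻¹) := by group
    _ = A * lam T u b * (U * A⁻¹ * U⁻¹) := by rw [← lam_eq_gg T u b]
    _ = lam T u b * A * (U * A⁻¹ * U⁻¹) := by rw [hLbA.symm.eq]
    _ = lam T u b * (A * U * A⁻¹ * U⁻¹) := by group
    _ = lam T u b * lam T u a := by rw [← lam_eq_gg T u a]
    _ = lam T u a * lam T u b := hLL.eq

end LamAdditive

/-- `λ` is additive in its second coordinate: `λ(u, a+b) = λ(u,a) λ(u,b)`; since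
`λ(x,y) = λ(y,x)⁻¹`, it is consequently additive in both coordinates. -/
theorem statement7 (T : M ≃+ M) :
    (∀ u a b : M, lam T u (a + b) = lam T u a * lam T u b) ∧
    (∀ x y : M, lam T x y = (lam T y x)⁻¹) ∧
    (∀ a b u : M, lam T (a + b) u = lam T a u * lam T b u) := by
  refine ⟨fun u a b => lam_add_right T u a b, fun x y => lam_antisymm T x y, ?_⟩
  intro a b u
  have h := lam_commute T a u (lam T b u) (lam_mem T b u)
  rw [lam_antisymm T (a + b) u, lam_add_right T u a b, mul_inv_rev,
    ← lam_antisymm T b u, ← lam_antisymm T a u]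
  exact (h.eq).symm


end Clauwens
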